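/- Convergence of the plug-in derivative functional: let θ, θ̂ₙ be bounded measurable on compact 𝒳 with √n‖θ̂ₙ − θ‖_∞ ≤ C, sₙ → ∞ with sₙ/√n → 0, and let h be bounded measurable. Define Φ̂ₙ'(h) = ∫_{{|θ̂ₙ| ≥ 1/sₙ}} sgn(θ̂ₙ) h dx + ∫_{{|θ̂ₙ| < 1/sₙ}} |h| dx and Φ'_θ(h) = ∫_{{|θ|>0}} sgn(θ) h dx + ∫_{{θ=0}} |h| dx. Then |Φ̂ₙ'(h) − Φ'_θ(h)| ≤ (λ(M₁ₙ ∩ M₂^c) + λ(M₂ ∩ M₁ₙ^c))·‖h‖_∞ + ∫_{M₁ₙ∩M₂} |sgn(θ̂ₙ) − sgn(θ)|·|h| dx + ∫ over the corresponding symmetric-difference terms for the second integrals, and |Φ̂ₙ'(h) − Φ'_θ(h)| → 0 as n → ∞, where M₁ₙ = {|θ̂ₙ| > 1/sₙ}, M₂ = {|θ| > 0}. -/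

import Mathlib

open MeasureTheory Filter Set

lemma aux1' {α : Type*} [MeasurableSpace α] {μ : Measure α} {X S T : Set α}
    (hXm : MeasurableSet X) (hS : MeasurableSet S) (hT : MeasurableSet T)
    (hXfin : μ X ≠ ⊤) {f g : α → ℝ}
    (hfm : AEStronglyMeasurable f μ) (hgm : AEStronglyMeasurable g μ)
    {M : ℝ} (hM : 0 ≤ M) (hf : ∀ y ∈ X, |f y| ≤ M) (hg : ∀ y ∈ X, |g y| ≤ M) :
    |(∫ y in X ∩ S, f y ∂μ) - ∫ y in X ∩ T, g y ∂μ|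
      ≤ ((μ (X ∩ (S \ T))).toReal + (μ (X ∩ (T \ S))).toReal) * M
        + ∫ y in X ∩ S ∩ T, |f y - g y| ∂μ := by
  have hfin : ∀ U : Set α, U ⊆ X → μ U < ⊤ := fun U hU =>
    lt_of_le_of_lt (measure_mono hU) (lt_top_iff_ne_top.mpr hXfin)
  have hIf : IntegrableOn f X μ := by
    refine Measure.integrableOn_of_bounded (M := M) hXfin hfm ?_
    filter_upwards [ae_restrict_mem hXm] with y hy
    rw [Real.norm_eq_abs]; exact hf y hy
  have hIg : IntegrableOn g X μ := by
    refine Measure.integrableOn_of_bounded (M := M) hXfin hgm ?_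
    filter_upwards [ae_restrict_mem hXm] with y hy
    rw [Real.norm_eq_abs]; exact hg y hy
  have h1 : X ∩ S = (X ∩ (S \ T)) ∪ (X ∩ S ∩ T) := by
    ext y; simp only [mem_inter_iff, mem_union, mem_diff]; tauto
  have h2 : X ∩ T = (X ∩ (T \ S)) ∪ (X ∩ S ∩ T) := by
    ext y; simp only [mem_inter_iff, mem_union, mem_diff]; tauto
  have d1 : Disjoint (X ∩ (S \ T)) (X ∩ S ∩ T) := by
    rw [Set.disjoint_left]; rintro x ⟨_, _, hx2⟩ ⟨_, hx4⟩; exact hx2 hx4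
  have d2 : Disjoint (X ∩ (T \ S)) (X ∩ S ∩ T) := by
    rw [Set.disjoint_left]; rintro x ⟨_, _, hx2⟩ ⟨⟨_, hx4⟩, _⟩; exact hx2 hx4
  have mST : MeasurableSet (X ∩ S ∩ T) := (hXm.inter hS).inter hT
  have e1 : ∫ y in X ∩ S, f y ∂μ
      = (∫ y in X ∩ (S \ T), f y ∂μ) + ∫ y in X ∩ S ∩ T, f y ∂μ := by
    have e := setIntegral_union d1 mST
      (hIf.mono_set (fun y hy => hy.1)) (hIf.mono_set (fun y hy => hy.1.1))
    rw [← h1] at e; exact e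
  have e2 : ∫ y in X ∩ T, g y ∂μ
      = (∫ y in X ∩ (T \ S), g y ∂μ) + ∫ y in X ∩ S ∩ T, g y ∂μ := by
    have e := setIntegral_union d2 mST
      (hIg.mono_set (fun y hy => hy.1)) (hIg.mono_set (fun y hy => hy.1.1))
    rw [← h2] at e; exact e
  have e3 : (∫ y in X ∩ S ∩ T, f y ∂μ) - ∫ y in X ∩ S ∩ T, g y ∂μ
      = ∫ y in X ∩ S ∩ T, (f y - g y) ∂μ :=
    (integral_sub (hIf.mono_set (fun y hy => hy.1.1)) (hIg.mono_set (fun y hy => hy.1.1))).symm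
  have b1 : |∫ y in X ∩ (S \ T), f y ∂μ| ≤ M * (μ (X ∩ (S \ T))).toReal := by
    have := norm_setIntegral_le_of_norm_le_const (μ := μ) (s := X ∩ (S \ T)) (f := f)
      (hfin _ (fun y hy => hy.1)) (fun x hx => by rw [Real.norm_eq_abs]; exact hf x hx.1)
    simpa [Measure.real] using this
  have b2 : |∫ y in X ∩ (T \ S), g y ∂μ| ≤ M * (μ (X ∩ (T \ S))).toReal := by
    have := norm_setIntegral_le_of_norm_le_const (μ := μ) (s := X ∩ (T \ S)) (f := g)
      (hfin _ (fun y hy => hy.1)) (fun x hx => by rw [Real.norm_eq_abs]; exact hg x hx.1)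
    simpa [Measure.real] using this
  have b3 : |∫ y in X ∩ S ∩ T, (f y - g y) ∂μ| ≤ ∫ y in X ∩ S ∩ T, |f y - g y| ∂μ := by
    have := norm_integral_le_integral_norm (μ := μ.restrict (X ∩ S ∩ T)) (fun y => f y - g y)
    simpa [Real.norm_eq_abs] using this
  have e4 : (∫ y in X ∩ S, f y ∂μ) - ∫ y in X ∩ T, g y ∂μ
      = ((∫ y in X ∩ (S \ T), f y ∂μ) - ∫ y in X ∩ (T \ S), g y ∂μ)
        + ∫ y in X ∩ S ∩ T, (f y - g y) ∂μ := by
    rw [e1, e2, ← e3]; ring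
  rw [e4]
  calc |_ + _| ≤ |(∫ y in X ∩ (S \ T), f y ∂μ) - ∫ y in X ∩ (T \ S), g y ∂μ|
        + |∫ y in X ∩ S ∩ T, (f y - g y) ∂μ| := abs_add_le _ _
    _ ≤ (|∫ y in X ∩ (S \ T), f y ∂μ| + |∫ y in X ∩ (T \ S), g y ∂μ|)
        + |∫ y in X ∩ S ∩ T, (f y - g y) ∂μ| := by gcongr; exact abs_sub _ _
    _ ≤ ((μ (X ∩ (S \ T))).toReal + (μ (X ∩ (T \ S))).toReal) * M
        + ∫ y in X ∩ S ∩ T, |f y - g y| ∂μ := by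
      have := b1; have := b2; have := b3; nlinarith [b1, b2, b3]

lemma aux2' {α : Type*} [MeasurableSpace α] {μ : Measure α} {X S T : Set α}
    (hXm : MeasurableSet X) (hS : MeasurableSet S) (hT : MeasurableSet T)
    (hXfin : μ X ≠ ⊤) {f : α → ℝ}
    (hfm : AEStronglyMeasurable f μ) {M : ℝ} (hM : 0 ≤ M)
    (hf0 : ∀ y, 0 ≤ f y) (hf : ∀ y ∈ X, |f y| ≤ M) :
    |(∫ y in X ∩ S, f y ∂μ) - ∫ y in X ∩ T, f y ∂μ|
      ≤ (μ (X ∩ (S \ T ∪ T \ S))).toReal * M := by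
  have hfin : ∀ U : Set α, U ⊆ X → μ U < ⊤ := fun U hU =>
    lt_of_le_of_lt (measure_mono hU) (lt_top_iff_ne_top.mpr hXfin)
  have hIf : IntegrableOn f X μ := by
    refine Measure.integrableOn_of_bounded (M := M) hXfin hfm ?_
    filter_upwards [ae_restrict_mem hXm] with y hy
    rw [Real.norm_eq_abs]; exact hf y hy
  have h1 : X ∩ S = (X ∩ (S \ T)) ∪ (X ∩ S ∩ T) := by
    ext y; simp only [mem_inter_iff, mem_union, mem_diff]; tauto
  have h2 : X ∩ T = (X ∩ (T \ S)) ∪ (X ∩ S ∩ T) := by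
    ext y; simp only [mem_inter_iff, mem_union, mem_diff]; tauto
  have d1 : Disjoint (X ∩ (S \ T)) (X ∩ S ∩ T) := by
    rw [Set.disjoint_left]; rintro x ⟨_, _, hx2⟩ ⟨_, hx4⟩; exact hx2 hx4
  have d2 : Disjoint (X ∩ (T \ S)) (X ∩ S ∩ T) := by
    rw [Set.disjoint_left]; rintro x ⟨_, _, hx2⟩ ⟨⟨_, hx4⟩, _⟩; exact hx2 hx4
  have mST : MeasurableSet (X ∩ S ∩ T) := (hXm.inter hS).inter hT
  have e1 : ∫ y in X ∩ S, f y ∂μ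
      = (∫ y in X ∩ (S \ T), f y ∂μ) + ∫ y in X ∩ S ∩ T, f y ∂μ := by
    have e := setIntegral_union d1 mST
      (hIf.mono_set (fun y hy => hy.1)) (hIf.mono_set (fun y hy => hy.1.1))
    rw [← h1] at e; exact e
  have e2 : ∫ y in X ∩ T, f y ∂μ
      = (∫ y in X ∩ (T \ S), f y ∂μ) + ∫ y in X ∩ S ∩ T, f y ∂μ := by
    have e := setIntegral_union d2 mST
      (hIf.mono_set (fun y hy => hy.1)) (hIf.mono_set (fun y hy => hy.1.1))
    rw [← h2] at e; exact e
  set U := X ∩ (S \ T ∪ T \ S) with hU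
  have bb : ∀ V : Set α, V ⊆ U → MeasurableSet V →
      (0 ≤ ∫ y in V, f y ∂μ ∧ (∫ y in V, f y ∂μ) ≤ (μ U).toReal * M) := by
    intro V hV hVm
    constructor
    · exact setIntegral_nonneg hVm (fun y _ => hf0 y)
    · have hVX : V ⊆ X := fun y hy => (hV hy).1
      have := norm_setIntegral_le_of_norm_le_const (μ := μ) (s := V) (f := f)
        (hfin _ hVX) (fun x hx => by rw [Real.norm_eq_abs]; exact hf x (hVX hx))
      have h3 : (∫ y in V, f y ∂μ) ≤ M * (μ V).toReal :=
        le_trans (le_abs_self _) (by simpa [Measure.real] using this)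
      have h4 : (μ V).toReal ≤ (μ U).toReal :=
        ENNReal.toReal_mono (ne_of_lt (hfin _ (fun y hy => hy.1))) (measure_mono hV)
      nlinarith
  have s1 : X ∩ (S \ T) ⊆ U := fun y hy => ⟨hy.1, Or.inl hy.2⟩
  have s2 : X ∩ (T \ S) ⊆ U := fun y hy => ⟨hy.1, Or.inr hy.2⟩
  obtain ⟨p1, p2⟩ := bb _ s1 (hXm.inter (hS.diff hT))
  obtain ⟨q1, q2⟩ := bb _ s2 (hXm.inter (hT.diff hS))
  rw [e1, e2]
  rw [abs_sub_le_iff]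
  constructor <;> linarith

lemma meas_sign' : Measurable Real.sign := by
  unfold Real.sign
  exact Measurable.ite (measurableSet_lt measurable_id measurable_const) measurable_const
    (Measurable.ite (measurableSet_lt measurable_const measurable_id) measurable_const
      measurable_const)

lemma abs_sign_le_one' (x : ℝ) : |Real.sign x| ≤ 1 := by
  rcases lt_trichotomy x 0 with hx | hx | hx
  · simp [Real.sign_of_neg hx]
  · simp [hx]
  · simp [Real.sign_of_pos hx]

lemma sign_eq_of_close' {a b : ℝ} (hab : |a - b| < |a|) : Real.sign a = Real.sign b := by
  rcases lt_trichotomy a 0 with ha | ha | ha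
  · have hb : b < 0 := by
      by_contra hb
      push_neg at hb
      have h1 : |a - b| = b - a := by rw [abs_of_nonpos (by linarith)]; ring
      rw [h1, abs_of_neg ha] at hab; linarith
    rw [Real.sign_of_neg ha, Real.sign_of_neg hb]
  · exfalso; rw [ha] at hab; simp at hab; linarith [abs_nonneg b]
  · have hb : 0 < b := by
      by_contra hb
      push_neg at hb
      rw [abs_of_nonneg (by linarith), abs_of_pos ha] at hab; linarith
    rw [Real.sign_of_pos ha, Real.sign_of_pos hb]

lemma sqrt_nat_tendsto : Filter.Tendsto (fun n : ℕ => Real.sqrt n) atTop atTop :=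
  (tendsto_atTop_atTop_of_monotone (fun _ _ hab => Real.sqrt_le_sqrt hab)
    (fun b => ⟨b ^ 2, by rw [Real.sqrt_sq_eq_abs]; exact le_abs_self b⟩)).comp
    tendsto_natCast_atTop_atTop


/-- Convergence of the plug-in derivative functional: with
`Φ̂ₙ'(h) = ∫_{|θ̂ₙ| ≥ 1/sₙ} sgn(θ̂ₙ)h + ∫_{|θ̂ₙ| < 1/sₙ} |h|` and
`Φ'_θ(h) = ∫_{|θ|>0} sgn(θ)h + ∫_{θ=0} |h|`, one has the bound by the measures of
the set discrepancies and the sign-difference integral, and `|Φ̂ₙ'(h) − Φ'_θ(h)| → 0`. -/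
theorem plugin_derivative_tendsto
    {d : ℕ} (X : Set (Fin d → ℝ)) (hX : IsCompact X) (hXm : MeasurableSet X)
    (θ : (Fin d → ℝ) → ℝ) (θhat : ℕ → (Fin d → ℝ) → ℝ)
    (hθm : Measurable θ) (hθhm : ∀ n, Measurable (θhat n))
    (Mθ : ℝ) (hθb : ∀ y ∈ X, |θ y| ≤ Mθ)
    (h : (Fin d → ℝ) → ℝ) (hhm : Measurable h)
    (Mh : ℝ) (hMh : 0 ≤ Mh) (hhb : ∀ y ∈ X, |h y| ≤ Mh)
    (s : ℕ → ℝ) (hs : ∀ n, 0 < s n) (hsinf : Tendsto s atTop atTop)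
    (hsn : Tendsto (fun n : ℕ => s n / Real.sqrt n) atTop (nhds 0))
    (C : ℝ) (hC : 0 < C)
    (hsup : ∀ n : ℕ, ∀ y ∈ X, Real.sqrt n * |θhat n y - θ y| ≤ C) :
    (∀ n : ℕ,
      |((∫ y in X ∩ {y | 1 / s n ≤ |θhat n y|}, Real.sign (θhat n y) * h y) +
          ∫ y in X ∩ {y | |θhat n y| < 1 / s n}, |h y|) -
        ((∫ y in X ∩ {y | 0 < |θ y|}, Real.sign (θ y) * h y) +
          ∫ y in X ∩ {y | θ y = 0}, |h y|)|
      ≤ ((volume (X ∩ ({y | 1 / s n ≤ |θhat n y|} \ {y | 0 < |θ y|}))).toReal +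
          (volume (X ∩ ({y | 0 < |θ y|} \ {y | 1 / s n ≤ |θhat n y|}))).toReal) * Mh
        + (∫ y in X ∩ {y | 1 / s n ≤ |θhat n y|} ∩ {y | 0 < |θ y|},
            |Real.sign (θhat n y) - Real.sign (θ y)| * |h y|)
        + (volume (X ∩ (({y | |θhat n y| < 1 / s n} \ {y | θ y = 0}) ∪
            ({y | θ y = 0} \ {y | |θhat n y| < 1 / s n})))).toReal * Mh) ∧
    Tendsto
      (fun n : ℕ =>
        |((∫ y in X ∩ {y | 1 / s n ≤ |θhat n y|}, Real.sign (θhat n y) * h y) +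
            ∫ y in X ∩ {y | |θhat n y| < 1 / s n}, |h y|) -
          ((∫ y in X ∩ {y | 0 < |θ y|}, Real.sign (θ y) * h y) +
            ∫ y in X ∩ {y | θ y = 0}, |h y|)|)
      atTop (nhds 0) := by
  have hXfin : volume X ≠ ⊤ := hX.measure_lt_top.ne
  have mS : ∀ n, MeasurableSet {y : Fin d → ℝ | 1 / s n ≤ |θhat n y|} := fun n =>
    measurableSet_le measurable_const (hθhm n).abs
  have mD : ∀ n, MeasurableSet {y : Fin d → ℝ | |θhat n y| < 1 / s n} := fun n =>
    measurableSet_lt (hθhm n).abs measurable_const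
  have mT : MeasurableSet {y : Fin d → ℝ | 0 < |θ y|} :=
    measurableSet_lt measurable_const hθm.abs
  have mE : MeasurableSet {y : Fin d → ℝ | θ y = 0} := hθm (measurableSet_singleton 0)
  have hsgnm : ∀ n, AEStronglyMeasurable (fun y => Real.sign (θhat n y) * h y) volume :=
    fun n => ((meas_sign'.comp (hθhm n)).mul hhm).aestronglyMeasurable
  have hgm' : AEStronglyMeasurable (fun y => Real.sign (θ y) * h y) volume :=
    ((meas_sign'.comp hθm).mul hhm).aestronglyMeasurable
  have habsm : AEStronglyMeasurable (fun y => |h y|) volume := hhm.abs.aestronglyMeasurable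
  have hfb : ∀ n, ∀ y ∈ X, |Real.sign (θhat n y) * h y| ≤ Mh := by
    intro n y hy
    rw [abs_mul]
    calc |Real.sign (θhat n y)| * |h y| ≤ 1 * Mh :=
          mul_le_mul (abs_sign_le_one' _) (hhb y hy) (abs_nonneg _) zero_le_one
      _ = Mh := one_mul Mh
  have hgb : ∀ y ∈ X, |Real.sign (θ y) * h y| ≤ Mh := by
    intro y hy
    rw [abs_mul]
    calc |Real.sign (θ y)| * |h y| ≤ 1 * Mh :=
          mul_le_mul (abs_sign_le_one' _) (hhb y hy) (abs_nonneg _) zero_le_one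
      _ = Mh := one_mul Mh
  have habsb : ∀ y ∈ X, |(|h y|)| ≤ Mh := fun y hy => by rw [abs_abs]; exact hhb y hy
  have key : ∀ n : ℕ,
      |((∫ y in X ∩ {y | 1 / s n ≤ |θhat n y|}, Real.sign (θhat n y) * h y) +
          ∫ y in X ∩ {y | |θhat n y| < 1 / s n}, |h y|) -
        ((∫ y in X ∩ {y | 0 < |θ y|}, Real.sign (θ y) * h y) +
          ∫ y in X ∩ {y | θ y = 0}, |h y|)|
      ≤ ((volume (X ∩ ({y | 1 / s n ≤ |θhat n y|} \ {y | 0 < |θ y|}))).toReal +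
          (volume (X ∩ ({y | 0 < |θ y|} \ {y | 1 / s n ≤ |θhat n y|}))).toReal) * Mh
        + (∫ y in X ∩ {y | 1 / s n ≤ |θhat n y|} ∩ {y | 0 < |θ y|},
            |Real.sign (θhat n y) - Real.sign (θ y)| * |h y|)
        + (volume (X ∩ (({y | |θhat n y| < 1 / s n} \ {y | θ y = 0}) ∪
            ({y | θ y = 0} \ {y | |θhat n y| < 1 / s n})))).toReal * Mh := by
    intro n
    have A1 := aux1' (μ := volume) (X := X) (S := {y | 1 / s n ≤ |θhat n y|})
      (T := {y | 0 < |θ y|}) (f := fun y => Real.sign (θhat n y) * h y)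
      (g := fun y => Real.sign (θ y) * h y)
      hXm (mS n) mT hXfin (hsgnm n) hgm' hMh (hfb n) hgb
    have eC : (∫ y in X ∩ {y | 1 / s n ≤ |θhat n y|} ∩ {y | 0 < |θ y|},
          |Real.sign (θhat n y) * h y - Real.sign (θ y) * h y|)
        = ∫ y in X ∩ {y | 1 / s n ≤ |θhat n y|} ∩ {y | 0 < |θ y|},
          |Real.sign (θhat n y) - Real.sign (θ y)| * |h y| :=
      setIntegral_congr_fun ((hXm.inter (mS n)).inter mT)
        (fun y _ => by rw [← sub_mul, abs_mul])
    rw [eC] at A1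
    have A2 := aux2' (μ := volume) (X := X) (S := {y | |θhat n y| < 1 / s n})
      (T := {y | θ y = 0}) (f := fun y => |h y|)
      hXm (mD n) mE hXfin habsm hMh (fun y => abs_nonneg _) habsb
    set a1 := ∫ y in X ∩ {y | 1 / s n ≤ |θhat n y|}, Real.sign (θhat n y) * h y with ha1
    set a2 := ∫ y in X ∩ {y | |θhat n y| < 1 / s n}, |h y| with ha2
    set b1 := ∫ y in X ∩ {y | 0 < |θ y|}, Real.sign (θ y) * h y with hb1
    set b2 := ∫ y in X ∩ {y | θ y = 0}, |h y| with hb2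
    have tri : |a1 + a2 - (b1 + b2)| ≤ |a1 - b1| + |a2 - b2| := by
      have h' : a1 + a2 - (b1 + b2) = (a1 - b1) + (a2 - b2) := by ring
      rw [h']; exact abs_add_le _ _
    linarith [A1, A2, tri]
  refine ⟨key, ?_⟩
  -- auxiliary limits
  have heps : Tendsto (fun n : ℕ => 1 / s n + C / Real.sqrt n) atTop (nhds 0) := by
    have t1 : Tendsto (fun n => 1 / s n) atTop (nhds 0) := by
      have := hsinf.inv_tendsto_atTop; simp only [one_div]; exact this
    have t2 : Tendsto (fun n : ℕ => C / Real.sqrt n) atTop (nhds 0) :=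
      Tendsto.div_atTop tendsto_const_nhds sqrt_nat_tendsto
    simpa using t1.add t2
  have mSk : ∀ c : ℝ, MeasurableSet {y : Fin d → ℝ | 0 < |θ y| ∧ |θ y| ≤ c} := fun c =>
    (measurableSet_lt measurable_const hθm.abs).inter (measurableSet_le hθm.abs measurable_const)
  have hTk : Tendsto (fun k : ℕ => volume (X ∩ {y | 0 < |θ y| ∧ |θ y| ≤ 1 / ((k : ℝ) + 1)}))
      atTop (nhds 0) := by
    have hanti : Antitone (fun k : ℕ => X ∩ {y | 0 < |θ y| ∧ |θ y| ≤ 1 / ((k : ℝ) + 1)}) := by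
      intro k l hkl
      refine inter_subset_inter_right X (fun y hy => ⟨hy.1, le_trans hy.2 ?_⟩)
      apply one_div_le_one_div_of_le
      · positivity
      · have : (k : ℝ) ≤ (l : ℝ) := by exact_mod_cast hkl
        linarith
    have hempty : (⋂ k : ℕ, X ∩ {y | 0 < |θ y| ∧ |θ y| ≤ 1 / ((k : ℝ) + 1)}) = ∅ := by
      rw [eq_empty_iff_forall_notMem]
      intro y hy
      simp only [mem_iInter, mem_inter_iff, mem_setOf_eq] at hy
      obtain ⟨k, hk⟩ := exists_nat_one_div_lt (hy 0).2.1
      exact absurd (hy k).2.2 (not_le.mpr hk)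
    have := tendsto_measure_iInter_atTop (μ := volume)
      (s := fun k : ℕ => X ∩ {y | 0 < |θ y| ∧ |θ y| ≤ 1 / ((k : ℝ) + 1)})
      (fun k => (hXm.inter (mSk _)).nullMeasurableSet) hanti
      ⟨0, (lt_of_le_of_lt (measure_mono inter_subset_left) hX.measure_lt_top).ne⟩
    rw [hempty, measure_empty] at this
    exact this
  have hmu : Tendsto
      (fun n : ℕ => volume (X ∩ {y | 0 < |θ y| ∧ |θ y| ≤ 1 / s n + C / Real.sqrt n}))
      atTop (nhds 0) := by
    rw [ENNReal.tendsto_atTop_zero]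
    intro δ hδ
    obtain ⟨k, hk⟩ := (hTk.eventually_lt_const hδ).exists
    obtain ⟨N, hN⟩ := eventually_atTop.mp
      (heps.eventually_lt_const (show (0 : ℝ) < 1 / ((k : ℝ) + 1) by positivity))
    refine ⟨N, fun n hn => ?_⟩
    refine le_trans (measure_mono ?_) hk.le
    intro y hy
    exact ⟨hy.1, hy.2.1, le_trans hy.2.2 (hN n hn).le⟩
  have hmreal : Tendsto
      (fun n : ℕ =>
        (volume (X ∩ {y | 0 < |θ y| ∧ |θ y| ≤ 1 / s n + C / Real.sqrt n})).toReal)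
      atTop (nhds 0) := by
    have := (ENNReal.tendsto_toReal (a := 0) (by simp)).comp hmu
    rw [ENNReal.toReal_zero] at this; exact this
  -- eventual good behavior
  have hev : ∀ᶠ n : ℕ in atTop, 1 ≤ n ∧ C / Real.sqrt n < 1 / s n := by
    have h1 : ∀ᶠ n : ℕ in atTop, s n / Real.sqrt n < 1 / C :=
      hsn.eventually_lt_const (by positivity)
    filter_upwards [h1, eventually_ge_atTop 1] with n hn1 hn2
    refine ⟨hn2, ?_⟩
    have hn0 : (0 : ℝ) < n := by exact_mod_cast Nat.lt_of_lt_of_le Nat.zero_lt_one hn2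
    have hsq : (0 : ℝ) < Real.sqrt n := Real.sqrt_pos.mpr hn0
    rw [div_lt_div_iff₀ hsq (hs n)]
    rw [div_lt_div_iff₀ hsq hC] at hn1
    nlinarith [hn1]
  apply squeeze_zero' (Filter.Eventually.of_forall fun n => abs_nonneg _) ?_
    (show Tendsto (fun n : ℕ =>
        (volume (X ∩ {y | 0 < |θ y| ∧ |θ y| ≤ 1 / s n + C / Real.sqrt n})).toReal * Mh +
        (volume (X ∩ {y | 0 < |θ y| ∧ |θ y| ≤ 1 / s n + C / Real.sqrt n})).toReal * Mh)
      atTop (nhds 0) by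
      simpa using (hmreal.mul tendsto_const_nhds).add (hmreal.mul tendsto_const_nhds))
  filter_upwards [hev] with n hn
  obtain ⟨hn1, hcs⟩ := hn
  refine le_trans (key n) ?_
  have hn0 : (0 : ℝ) < n := by exact_mod_cast Nat.lt_of_lt_of_le Nat.zero_lt_one hn1
  have hsq : (0 : ℝ) < Real.sqrt n := Real.sqrt_pos.mpr hn0
  have hr : ∀ y ∈ X, |θhat n y - θ y| ≤ C / Real.sqrt n := by
    intro y hy
    rw [le_div_iff₀ hsq, mul_comm]
    exact hsup n y hy
  have emp1 : X ∩ ({y | 1 / s n ≤ |θhat n y|} \ {y | 0 < |θ y|}) = ∅ := by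
    rw [eq_empty_iff_forall_notMem]
    rintro y ⟨hyX, hyS, hyT⟩
    simp only [mem_setOf_eq, not_lt] at hyS hyT
    have hz : θ y = 0 := abs_eq_zero.mp (le_antisymm hyT (abs_nonneg _))
    have habs := hr y hyX
    rw [hz, sub_zero] at habs
    linarith
  have int0 : (∫ y in X ∩ {y | 1 / s n ≤ |θhat n y|} ∩ {y | 0 < |θ y|},
      |Real.sign (θhat n y) - Real.sign (θ y)| * |h y|) = 0 := by
    rw [setIntegral_congr_fun (g := fun _ => (0 : ℝ)) ((hXm.inter (mS n)).inter mT) ?_]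
    · exact integral_zero _ _
    · rintro y ⟨⟨hyX, hyS⟩, hyT⟩
      simp only [mem_setOf_eq] at hyS hyT
      have hclose : |θhat n y - θ y| < |θhat n y| :=
        lt_of_le_of_lt (hr y hyX) (lt_of_lt_of_le hcs hyS)
      simp [sign_eq_of_close' hclose]
  have sub1 : X ∩ ({y | 0 < |θ y|} \ {y | 1 / s n ≤ |θhat n y|})
      ⊆ X ∩ {y | 0 < |θ y| ∧ |θ y| ≤ 1 / s n + C / Real.sqrt n} := by
    rintro y ⟨hyX, hyT, hyS⟩
    simp only [mem_setOf_eq, not_le] at hyT hyS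
    refine ⟨hyX, hyT, ?_⟩
    have h1 := abs_sub_abs_le_abs_sub (θ y) (θhat n y)
    have h2 : |θ y - θhat n y| = |θhat n y - θ y| := abs_sub_comm _ _
    have h3 := hr y hyX
    linarith
  have sub2 : X ∩ (({y | |θhat n y| < 1 / s n} \ {y | θ y = 0}) ∪
        ({y | θ y = 0} \ {y | |θhat n y| < 1 / s n}))
      ⊆ X ∩ {y | 0 < |θ y| ∧ |θ y| ≤ 1 / s n + C / Real.sqrt n} := by
    rintro y ⟨hyX, hy | hy⟩
    · obtain ⟨hyD, hyE⟩ := hy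
      simp only [mem_setOf_eq] at hyD hyE
      refine ⟨hyX, abs_pos.mpr hyE, ?_⟩
      have h1 := abs_sub_abs_le_abs_sub (θ y) (θhat n y)
      have h2 : |θ y - θhat n y| = |θhat n y - θ y| := abs_sub_comm _ _
      have h3 := hr y hyX
      linarith
    · exfalso
      obtain ⟨hyE, hyD⟩ := hy
      simp only [mem_setOf_eq, not_lt] at hyE hyD
      have habs := hr y hyX
      rw [hyE, sub_zero] at habs
      linarith
  have hfin : ∀ U : Set (Fin d → ℝ), U ⊆ X → volume U ≠ ⊤ := fun U hU =>
    (lt_of_le_of_lt (measure_mono hU) hX.measure_lt_top).ne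
  have hb : (volume (X ∩ ({y | 0 < |θ y|} \ {y | 1 / s n ≤ |θhat n y|}))).toReal
      ≤ (volume (X ∩ {y | 0 < |θ y| ∧ |θ y| ≤ 1 / s n + C / Real.sqrt n})).toReal :=
    ENNReal.toReal_mono (hfin _ inter_subset_left) (measure_mono sub1)
  have hd : (volume (X ∩ (({y | |θhat n y| < 1 / s n} \ {y | θ y = 0}) ∪
        ({y | θ y = 0} \ {y | |θhat n y| < 1 / s n})))).toReal
      ≤ (volume (X ∩ {y | 0 < |θ y| ∧ |θ y| ≤ 1 / s n + C / Real.sqrt n})).toReal :=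
    ENNReal.toReal_mono (hfin _ inter_subset_left) (measure_mono sub2)
  rw [emp1, int0]
  simp only [measure_empty, ENNReal.toReal_zero, zero_add, add_zero]
  nlinarith [hb, hd, hMh, ENNReal.toReal_nonneg
    (a := volume (X ∩ ({y | 0 < |θ y|} \ {y | 1 / s n ≤ |θhat n y|})))]
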